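/- Let X be a perfect compact metric space and let Q ⊆ 2^X be a hereditary subset of the hyperspace (meaning 2^A ⊆ Q for every A ∈ Q) which is residual in 2^X. Then there exists an increasing sequence of Cantor sets C_1 ⊆ C_2 ⊆ ⋯ ⊆ X with C_i ∈ Q for every i ≥ 1 and ⋃_{i=1}^∞ C_i dense in X. -/

import Mathlib

set_option linter.unusedSectionVars false

open TopologicalSpace Metric Set

namespace KM17

variable {X : Type*} [MetricSpace X] [CompactSpace X] [Nonempty X]

/-- A node: center, radius, label. -/
abbrev Node (X : Type*) := X × ℝ × ℕ

def nb (p : Node X) : Set X := closedBall p.1 p.2.1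

def reg (F : Finset (Node X)) : Prop :=
  (∀ p ∈ F, 0 < p.2.1) ∧ (F : Set (Node X)).Pairwise fun p q => Disjoint (nb p) (nb q)

def sub (j : ℕ) (F : Finset (Node X)) : Finset (Node X) := F.filter (fun p => p.2.2 ≤ j)

def uni (F : Finset (Node X)) : Set X := ⋃ p ∈ F, nb p

lemma nb_nonempty {p : Node X} (h : 0 < p.2.1) : (nb p).Nonempty :=
  ⟨p.1, mem_closedBall_self h.le⟩

lemma isClosed_nb (p : Node X) : IsClosed (nb p) := isClosed_closedBall

lemma isClosed_uni (F : Finset (Node X)) : IsClosed (uni F) := by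
  apply Set.Finite.isClosed_biUnion F.finite_toSet
  exact fun p _ => isClosed_nb p

lemma isCompact_uni (F : Finset (Node X)) : IsCompact (uni F) :=
  (isClosed_uni F).isCompact

lemma sub_mono_uni {j : ℕ} {F : Finset (Node X)} : uni (sub j F) ⊆ uni F := by
  apply Set.biUnion_subset_biUnion_left
  intro p hp
  exact Finset.mem_coe.2 (Finset.mem_of_mem_filter p hp)

lemma mem_sub {j : ℕ} {F : Finset (Node X)} {p : Node X} :
    p ∈ sub j F ↔ p ∈ F ∧ p.2.2 ≤ j := Finset.mem_filter

lemma sub_subset {j : ℕ} {F : Finset (Node X)} : sub j F ⊆ F := Finset.filter_subset _ _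

lemma sub_mono {j k : ℕ} (h : j ≤ k) {F : Finset (Node X)} : sub j F ⊆ sub k F := by
  intro p hp; rw [mem_sub] at *; exact ⟨hp.1, hp.2.trans h⟩

lemma reg_subset {F G : Finset (Node X)} (h : G ⊆ F) (hF : reg F) : reg G :=
  ⟨fun p hp => hF.1 p (h hp), hF.2.mono (Finset.coe_subset.2 h)⟩

/-- every point of a perfect space is an accumulation point -/
lemma exists_ne_close (hperf : Perfect (Set.univ : Set X)) (x : X) {ε : ℝ} (hε : 0 < ε) :
    ∃ y, y ≠ x ∧ dist y x < ε := by
  have hacc := hperf.acc x (mem_univ x)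
  rw [accPt_iff_nhds] at hacc
  obtain ⟨y, hy1, hy2⟩ := hacc (ball x ε) (ball_mem_nhds x hε)
  exact ⟨y, hy2, mem_ball.1 hy1.1⟩

/-- split one ball into two disjoint small subballs -/
lemma split_ball (hperf : Perfect (Set.univ : Set X)) (c : X) {r δ : ℝ}
    (hr : 0 < r) (hδ : 0 < δ) :
    ∃ z s, 0 < s ∧ s ≤ δ ∧ z ≠ c ∧ closedBall c s ⊆ closedBall c r ∧
      closedBall z s ⊆ closedBall c r ∧ Disjoint (closedBall c s) (closedBall z s) := by
  set ρ := min δ r with hρdef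
  have hρ : 0 < ρ := lt_min hδ hr
  obtain ⟨z, hz, hzd⟩ := exists_ne_close hperf c (half_pos hρ)
  have hd : 0 < dist z c := dist_pos.2 hz
  refine ⟨z, dist z c / 3, by linarith, ?_, hz, ?_, ?_, ?_⟩
  · have : ρ ≤ δ := min_le_left _ _
    linarith
  · apply closedBall_subset_closedBall
    have : ρ ≤ r := min_le_right _ _
    linarith
  · apply closedBall_subset_closedBall'
    have : ρ ≤ r := min_le_right _ _
    have hcz : dist z c ≤ ρ / 2 := hzd.le
    linarith
  · apply closedBall_disjoint_closedBall
    have hcz : dist c z = dist z c := dist_comm c z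
    linarith

end KM17
section
variable {X : Type*} [MetricSpace X] [CompactSpace X] [Nonempty X]
open TopologicalSpace Metric Set KM17
namespace KM17

/-- Refinement-with-splitting relation. -/
def Ext (F G : Finset (Node X)) : Prop :=
  (∀ q ∈ G, ∃ p ∈ F, p.2.2 = q.2.2 ∧ nb q ⊆ nb p) ∧
  (∀ p ∈ F, ∃ q ∈ G, ∃ q' ∈ G, q ≠ q' ∧ q.2.2 = p.2.2 ∧ q'.2.2 = p.2.2 ∧
    nb q ⊆ nb p ∧ nb q' ⊆ nb p)

lemma Ext.trans' {F G H : Finset (Node X)} (hG : reg G) (hH : reg H)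
    (h1 : Ext F G) (h2 : Ext G H) : Ext F H := by
  constructor
  · intro q hq
    obtain ⟨p, hp, hl, hsub⟩ := h2.1 q hq
    obtain ⟨p', hp', hl', hsub'⟩ := h1.1 p hp
    exact ⟨p', hp', by rw [hl', hl], hsub.trans hsub'⟩
  · intro p hp
    obtain ⟨q, hq, q', hq', hne, hl, hl', hs, hs'⟩ := h1.2 p hp
    obtain ⟨c, hc, _, _, _, hcl, _, hcs, _⟩ := h2.2 q hq
    obtain ⟨c', hc', _, _, _, hc'l, _, hc's, _⟩ := h2.2 q' hq'
    have hdisj : Disjoint (nb q) (nb q') := hG.2 hq hq' hne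
    have hcne : c ≠ c' := by
      intro h
      subst h
      have : nb c ⊆ (∅ : Set X) := by
        intro x hx
        exact (hdisj.le_bot ⟨hcs hx, hc's hx⟩ : x ∈ (∅ : Set X))
      exact absurd (this (nb_nonempty (hH.1 c hc)).choose_spec) (by simp)
    exact ⟨c, hc, c', hc', hcne, by rw [hcl, hl], by rw [hc'l, hl'],
      hcs.trans hs, hc's.trans hs'⟩

lemma plain_split_all (hperf : Perfect (Set.univ : Set X)) {F : Finset (Node X)}
    (hF : reg F) {δ : ℝ} (hδ : 0 < δ) :
    ∃ G, reg G ∧ Ext F G ∧ ∀ q ∈ G, q.2.1 ≤ δ := by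
  classical
  choose z s hs hsδ hzne hsub1 hsub2 hdisj using
    fun (p : {x // x ∈ F}) => split_ball hperf (p.1).1 (hF.1 p.1 p.2) hδ
  set c1 : {x // x ∈ F} → Node X := fun p => ((p.1).1, s p, (p.1).2.2) with hc1
  set c2 : {x // x ∈ F} → Node X := fun p => (z p, s p, (p.1).2.2) with hc2
  set G : Finset (Node X) := F.attach.biUnion (fun p => {c1 p, c2 p}) with hG
  have memG : ∀ q, q ∈ G ↔ ∃ p : {x // x ∈ F}, q = c1 p ∨ q = c2 p := by
    intro q
    simp [hG, Finset.mem_biUnion, Finset.mem_insert, Finset.mem_singleton]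
  have hsubs : ∀ (p : {x // x ∈ F}) q, (q = c1 p ∨ q = c2 p) → nb q ⊆ nb p.1 := by
    rintro p q (rfl | rfl)
    · exact hsub1 p
    · exact hsub2 p
  have hreg : reg G := by
    constructor
    · intro q hq
      obtain ⟨p, hp⟩ := (memG q).1 hq
      rcases hp with rfl | rfl <;> exact hs p
    · intro q hq q' hq' hne
      obtain ⟨p, hp⟩ := (memG q).1 (Finset.mem_coe.1 hq)
      obtain ⟨p', hp'⟩ := (memG q').1 (Finset.mem_coe.1 hq')
      by_cases hpp : p = p'
      · subst hpp
        rcases hp with rfl | rfl <;> rcases hp' with rfl | rfl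
        · exact absurd rfl hne
        · exact hdisj p
        · exact (hdisj p).symm
        · exact absurd rfl hne
      · have hne' : p.1 ≠ p'.1 := fun h => hpp (Subtype.ext h)
        have := hF.2 (Finset.mem_coe.2 p.2) (Finset.mem_coe.2 p'.2) hne'
        exact this.mono (hsubs p q hp) (hsubs p' q' hp')
  refine ⟨G, hreg, ⟨?_, ?_⟩, ?_⟩
  · intro q hq
    obtain ⟨p, hp⟩ := (memG q).1 hq
    refine ⟨p.1, p.2, ?_, hsubs p q hp⟩
    rcases hp with rfl | rfl <;> rfl
  · intro p hp
    refine ⟨c1 ⟨p, hp⟩, ?_, c2 ⟨p, hp⟩, ?_, ?_, rfl, rfl,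
      hsub1 ⟨p, hp⟩, hsub2 ⟨p, hp⟩⟩
    · exact (memG _).2 ⟨⟨p, hp⟩, Or.inl rfl⟩
    · exact (memG _).2 ⟨⟨p, hp⟩, Or.inr rfl⟩
    · intro h
      exact hzne ⟨p, hp⟩ (congrArg Prod.fst h).symm
  · intro q hq
    obtain ⟨p, hp⟩ := (memG q).1 hq
    rcases hp with rfl | rfl <;> exact hsδ p

end KM17
end
section
variable {X : Type*} [MetricSpace X] [CompactSpace X] [Nonempty X]
open TopologicalSpace Metric Set KM17
namespace KM17

lemma greedy {ε : ℝ} (hε : 0 < ε) (N : Finset X) :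
    ∃ Y : Finset X, Y ⊆ N ∧ ((Y : Set X).Pairwise fun a b => ε ≤ dist a b) ∧
      ∀ p ∈ N, ∃ y ∈ Y, dist p y < ε := by
  classical
  induction N using Finset.induction_on with
  | empty => exact ⟨∅, by simp⟩
  | insert _ _ ha ih =>
    rename_i a s
    obtain ⟨Y, hYs, hYp, hYc⟩ := ih
    by_cases hex : ∃ y ∈ Y, dist a y < ε
    · refine ⟨Y, hYs.trans (Finset.subset_insert _ _), hYp, ?_⟩
      intro p hp
      rcases Finset.mem_insert.1 hp with rfl | hp
      · exact hex
      · exact hYc p hp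
    · push_neg at hex
      refine ⟨insert a Y, Finset.insert_subset_insert a hYs, ?_, ?_⟩
      · rw [Finset.coe_insert]
        refine @Set.Pairwise.insert_of_symm _ _ _ _ ⟨?_⟩ hYp ?_
        · intro x y h
          rwa [dist_comm]
        · intro b hb _
          exact hex b hb
      · intro p hp
        rcases Finset.mem_insert.1 hp with rfl | hp
        · exact ⟨p, Finset.mem_insert_self _ _, by simp [hε]⟩
        · obtain ⟨y, hy, hdy⟩ := hYc p hp
          exact ⟨y, Finset.mem_insert_of_mem hy, hdy⟩

lemma creation (F : Finset (Node X)) (hF : reg F) {η : ℝ} (hη : 0 < η)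
    (hrad : ∀ p ∈ F, p.2.1 ≤ η) (i : ℕ) :
    ∃ G, F ⊆ G ∧ reg G ∧ (∀ q ∈ G, q ∉ F → q.2.2 = i ∧ q.2.1 = η) ∧
      (∀ q ∈ G, q.2.1 ≤ η) ∧ ∀ x : X, ∃ q ∈ G, dist x q.1 ≤ 3 * η := by
  classical
  have main : ∀ N : Finset X, ∃ G, F ⊆ G ∧ reg G ∧
      (∀ q ∈ G, q ∉ F → q.2.2 = i ∧ q.2.1 = η) ∧ (∀ q ∈ G, q.2.1 ≤ η) ∧
      ∀ p ∈ N, ∃ q ∈ G, dist p q.1 ≤ 2 * η := by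
    intro N
    induction N using Finset.induction_on with
    | empty => exact ⟨F, Finset.Subset.refl _, hF, fun q hq hq' => absurd hq hq', hrad, by simp⟩
    | insert _ _ ha ih =>
      rename_i a s
      obtain ⟨G, hFG, hG, hnew, hGrad, hcov⟩ := ih
      by_cases hd : ∀ q ∈ G, Disjoint (closedBall a η) (nb q)
      · refine ⟨insert (a, η, i) G, hFG.trans (Finset.subset_insert _ _), ?_, ?_, ?_, ?_⟩
        · constructor
          · intro q hq
            rcases Finset.mem_insert.1 hq with rfl | hq
            · exact hη
            · exact hG.1 q hq
          · rw [Finset.coe_insert]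
            refine @Set.Pairwise.insert_of_symm _ _ _ _ ⟨?_⟩ hG.2 ?_
            · intro x y h
              exact h.symm
            · intro b hb _
              exact hd b hb
        · intro q hq hqF
          rcases Finset.mem_insert.1 hq with rfl | hq
          · exact ⟨rfl, rfl⟩
          · exact hnew q hq hqF
        · intro q hq
          rcases Finset.mem_insert.1 hq with rfl | hq
          · exact le_refl _
          · exact hGrad q hq
        · intro p hp
          rcases Finset.mem_insert.1 hp with rfl | hp
          · exact ⟨(p, η, i), Finset.mem_insert_self _ _, by simpa using (by positivity : (0:ℝ) ≤ 2*η)⟩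
          · obtain ⟨q, hq, hdq⟩ := hcov p hp
            exact ⟨q, Finset.mem_insert_of_mem hq, hdq⟩
      · push_neg at hd
        obtain ⟨q, hq, hnd⟩ := hd
        refine ⟨G, hFG, hG, hnew, hGrad, ?_⟩
        intro p hp
        rcases Finset.mem_insert.1 hp with rfl | hp
        · refine ⟨q, hq, ?_⟩
          rw [Set.not_disjoint_iff] at hnd
          obtain ⟨x, hx1, hx2⟩ := hnd
          have h1 : dist p x ≤ η := mem_closedBall'.1 hx1
          have h2 : dist x q.1 ≤ q.2.1 := mem_closedBall.1 hx2
          have h3 : q.2.1 ≤ η := hGrad q hq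
          calc dist p q.1 ≤ dist p x + dist x q.1 := dist_triangle _ _ _
            _ ≤ 2 * η := by linarith
        · exact hcov p hp
  obtain ⟨t, -, htfin, htcov⟩ := finite_cover_balls_of_compact (isCompact_univ : IsCompact (Set.univ : Set X)) hη
  obtain ⟨G, hFG, hG, hnew, hGrad, hcov⟩ := main htfin.toFinset
  refine ⟨G, hFG, hG, hnew, hGrad, ?_⟩
  intro x
  have := htcov (mem_univ x)
  simp only [Set.mem_iUnion] at this
  obtain ⟨p, hp, hxp⟩ := this
  obtain ⟨q, hq, hdq⟩ := hcov p (htfin.mem_toFinset.2 hp)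
  refine ⟨q, hq, ?_⟩
  calc dist x q.1 ≤ dist x p + dist p q.1 := dist_triangle _ _ _
    _ ≤ 3 * η := by
        have : dist x p < η := mem_ball.1 hxp
        linarith

end KM17
end
section
variable {X : Type*} [MetricSpace X] [CompactSpace X] [Nonempty X]
open TopologicalSpace Metric Set KM17
namespace KM17

lemma hedist_ne_top (K L : NonemptyCompacts X) :
    EMetric.hausdorffEdist (K : Set X) (L : Set X) ≠ ⊤ :=
  hausdorffEdist_ne_top_of_nonempty_of_bounded K.nonempty L.nonempty
    K.isCompact.isBounded L.isCompact.isBounded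

lemma isOpen_subsets {V : Set X} (hV : IsOpen V) :
    IsOpen {K : NonemptyCompacts X | (K : Set X) ⊆ V} := by
  rw [Metric.isOpen_iff]
  intro K hK
  obtain ⟨ε, hε, hth⟩ := K.isCompact.exists_thickening_subset_open hV hK
  refine ⟨ε, hε, ?_⟩
  intro L hL
  rw [mem_ball, NonemptyCompacts.dist_eq] at hL
  intro x hx
  obtain ⟨y, hy, hxy⟩ := exists_dist_lt_of_hausdorffDist_lt hx hL (hedist_ne_top L K)
  exact hth (mem_thickening_iff.2 ⟨y, hy, hxy⟩)

lemma isOpen_meets {V : Set X} (hV : IsOpen V) :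
    IsOpen {K : NonemptyCompacts X | ((K : Set X) ∩ V).Nonempty} := by
  rw [Metric.isOpen_iff]
  intro K hK
  obtain ⟨x, hxK, hxV⟩ := hK
  obtain ⟨ε, hε, hball⟩ := Metric.isOpen_iff.1 hV x hxV
  refine ⟨ε, hε, ?_⟩
  intro L hL
  rw [mem_ball, NonemptyCompacts.dist_eq, hausdorffDist_comm] at hL
  obtain ⟨y, hy, hxy⟩ := exists_dist_lt_of_hausdorffDist_lt hxK hL (hedist_ne_top K L)
  exact ⟨y, hy, hball (by rwa [mem_ball, dist_comm])⟩

end KM17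
end
section
variable {X : Type*} [MetricSpace X] [CompactSpace X] [Nonempty X]
open TopologicalSpace Metric Set KM17
namespace KM17

lemma cond_ext (hperf : Perfect (Set.univ : Set X)) {F : Finset (Node X)} (hF : reg F)
    (hFne : F.Nonempty) {U : Set (NonemptyCompacts X)} (hUo : IsOpen U) (hUd : Dense U)
    {δ : ℝ} (hδ : 0 < δ) :
    ∃ G, reg G ∧ Ext F G ∧ (∀ q ∈ G, q.2.1 ≤ δ) ∧
      ∀ L : NonemptyCompacts X, (L : Set X) ⊆ uni G →
        (∀ q ∈ G, ((L : Set X) ∩ nb q).Nonempty) → L ∈ U := by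
  classical
  set W : Set X := ⋃ p : {q // q ∈ F}, ball ((p : Node X)).1 ((p : Node X)).2.1 with hW
  have hWopen : IsOpen W := isOpen_iUnion fun p => isOpen_ball
  set Vop : Set (NonemptyCompacts X) :=
    {K | (K : Set X) ⊆ W} ∩ ⋂ p ∈ F, {K | ((K : Set X) ∩ ball p.1 p.2.1).Nonempty} with hVop
  have hVopen : IsOpen Vop :=
    (isOpen_subsets hWopen).inter
      (isOpen_biInter_finset fun p _ => isOpen_meets isOpen_ball)
  -- a finite witness in Vop
  have hVne : Vop.Nonempty := by
    obtain ⟨p₀, hp₀⟩ := hFne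
    refine ⟨⟨⟨(F.image Prod.fst : Finset X), (F.image Prod.fst).finite_toSet.isCompact⟩, ?_⟩, ?_, ?_⟩
    · exact ⟨p₀.1, by simp; exact ⟨p₀.2.1, p₀.2.2, hp₀⟩⟩
    · intro x hx
      simp only [Finset.coe_image, mem_image, Finset.mem_coe] at hx
      obtain ⟨p, hp, rfl⟩ := hx
      exact mem_iUnion.2 ⟨⟨p, hp⟩, mem_ball_self (hF.1 p hp)⟩
    · simp only [mem_iInter]
      intro p hp
      exact ⟨p.1, by simpa using Finset.mem_image_of_mem Prod.fst hp,
        mem_ball_self (hF.1 p hp)⟩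
  obtain ⟨K, hKV, hKU⟩ := hUd.inter_open_nonempty Vop hVopen hVne
  obtain ⟨hKW, hKme'⟩ := hKV
  have hKme : ∀ p : {q // q ∈ F}, ((K : Set X) ∩ ball ((p : Node X)).1 ((p : Node X)).2.1).Nonempty := by
    intro p
    have := mem_iInter.1 hKme' p.1
    exact mem_iInter.1 this p.2
  obtain ⟨ρ, hρ, hρball⟩ := Metric.isOpen_iff.1 hUo K hKU
  obtain ⟨μ, hμ, hleb⟩ := lebesgue_number_lemma_of_metric K.isCompact
    (fun p : {q // q ∈ F} => isOpen_ball) hKW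
  set δ' : ℝ := min (min δ (ρ/8)) μ with hδ'def
  have hδ' : 0 < δ' := lt_min (lt_min hδ (by linarith)) hμ
  have hδ'δ : δ' ≤ δ := (min_le_left _ _).trans (min_le_left _ _)
  have hδ'ρ : δ' ≤ ρ/8 := (min_le_left _ _).trans (min_le_right _ _)
  have hδ'μ : δ' ≤ μ := min_le_right _ _
  -- parent assignment via Lebesgue number
  choose P hP using hleb
  have huniq : ∀ (p p' : {q // q ∈ F}) (x : X),
      x ∈ ball ((p : Node X)).1 ((p : Node X)).2.1 →
      x ∈ ball ((p' : Node X)).1 ((p' : Node X)).2.1 → p = p' := by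
    intro p p' x hx hx'
    by_contra hne
    have hne' : (p : Node X) ≠ (p' : Node X) := fun h => hne (Subtype.ext h)
    have := hF.2 (Finset.mem_coe.2 p.2) (Finset.mem_coe.2 p'.2) hne'
    exact this.le_bot ⟨ball_subset_closedBall hx, ball_subset_closedBall hx'⟩
  -- witnesses in each parent ball
  choose w hwK hwB using hKme
  -- finite net of K
  obtain ⟨t, htK, htfin, htcov⟩ := finite_cover_balls_of_compact K.isCompact hδ'
  set N : Finset X := htfin.toFinset with hN
  have hNK : ∀ a ∈ N, a ∈ (K : Set X) := fun a ha => htK (htfin.mem_toFinset.1 ha)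
  -- per-parent nets
  set Np : {q // q ∈ F} → Finset X := fun p =>
    insert (w p) (N.filter (fun x => x ∈ ball ((p : Node X)).1 ((p : Node X)).2.1)) with hNp
  choose Y hYsub hYsep hYcov using fun p : {q // q ∈ F} => greedy hδ' (Np p)
  have hyB : ∀ p, ∀ y ∈ Y p, y ∈ ball ((p : Node X)).1 ((p : Node X)).2.1 := by
    intro p y hy
    rcases Finset.mem_insert.1 (hYsub p hy) with rfl | hy'
    · exact hwB p
    · exact (Finset.mem_filter.1 hy').2
  have hyK : ∀ p, ∀ y ∈ Y p, y ∈ (K : Set X) := by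
    intro p y hy
    rcases Finset.mem_insert.1 (hYsub p hy) with rfl | hy'
    · exact hwK p
    · exact hNK y (Finset.mem_filter.1 hy').1
  have hparent : ∀ p, ∀ y ∈ Y p, ball y μ ⊆ ball ((p : Node X)).1 ((p : Node X)).2.1 := by
    intro p y hy
    have h1 := hP y (hyK p y hy)
    have h2 : y ∈ ball ((P y (hyK p y hy) : Node X)).1 ((P y (hyK p y hy) : Node X)).2.1 :=
      h1 (mem_ball_self hμ)
    rw [huniq (P y (hyK p y hy)) p y h2 (hyB p y hy)] at h1
    exact h1
  -- twins
  choose z hzne hzd using fun y : X => exists_ne_close hperf y (by positivity : 0 < δ'/4)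
  set s : X → ℝ := fun y => dist (z y) y / 3 with hs
  have hspos : ∀ y, 0 < s y := fun y => by
    have := dist_pos.2 (hzne y)
    positivity
  have hsle : ∀ y, s y ≤ δ'/12 := fun y => by
    have := (hzd y).le
    simp only [hs]
    linarith
  set ch1 : {q // q ∈ F} → X → Node X := fun p y => (y, s y, ((p : Node X)).2.2) with hch1
  set ch2 : {q // q ∈ F} → X → Node X := fun p y => (z y, s y, ((p : Node X)).2.2) with hch2
  set G : Finset (Node X) :=
    F.attach.biUnion (fun p => (Y p).biUnion (fun y => {ch1 p y, ch2 p y})) with hG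
  have memG : ∀ q, q ∈ G ↔ ∃ p, ∃ y ∈ Y p, q = ch1 p y ∨ q = ch2 p y := by
    intro q
    simp [hG, Finset.mem_biUnion, Finset.mem_insert, Finset.mem_singleton]
  -- basic properties of children
  have hcenter : ∀ p y q, (q = ch1 p y ∨ q = ch2 p y) → dist q.1 y ≤ δ'/4 ∧ q.2.1 = s y := by
    rintro p y q (rfl | rfl)
    · exact ⟨by simp [hch1]; positivity, rfl⟩
    · exact ⟨by simpa [hch2] using (hzd y).le.trans (le_refl _), rfl⟩
  have hchsub : ∀ p y q, (q = ch1 p y ∨ q = ch2 p y) → nb q ⊆ closedBall y (δ'/3) := by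
    intro p y q hq x hx
    obtain ⟨h1, h2⟩ := hcenter p y q hq
    simp only [nb, mem_closedBall] at hx
    have hx' : dist x q.1 ≤ s y := by rwa [h2] at hx
    have := hsle y
    calc dist x y ≤ dist x q.1 + dist q.1 y := dist_triangle _ _ _
      _ ≤ δ'/3 := by linarith
  have hchp : ∀ p y q, y ∈ Y p → (q = ch1 p y ∨ q = ch2 p y) →
      nb q ⊆ ball ((p : Node X)).1 ((p : Node X)).2.1 := by
    intro p y q hy hq
    refine (hchsub p y q hq).trans (Subset.trans ?_ (hparent p y hy))
    intro x hx
    rw [mem_closedBall] at hx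
    rw [mem_ball]
    calc dist x y ≤ δ'/3 := hx
      _ < μ := by linarith [hδ'μ, hδ']
  have hreg : reg G := by
    constructor
    · intro q hq
      obtain ⟨p, y, hy, hcase⟩ := (memG q).1 hq
      rw [(hcenter p y q hcase).2]
      exact hspos y
    · intro q hq q' hq' hne
      obtain ⟨p, y, hy, hcase⟩ := (memG q).1 (Finset.mem_coe.1 hq)
      obtain ⟨p', y', hy', hcase'⟩ := (memG q').1 (Finset.mem_coe.1 hq')
      by_cases hpp : p = p'
      · subst hpp
        by_cases hyy : y = y'
        · subst hyy
          -- same pair, distinct elements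
          have : (q = ch1 p y ∧ q' = ch2 p y) ∨ (q = ch2 p y ∧ q' = ch1 p y) := by
            rcases hcase with rfl | rfl <;> rcases hcase' with rfl | rfl
            · exact absurd rfl hne
            · exact Or.inl ⟨rfl, rfl⟩
            · exact Or.inr ⟨rfl, rfl⟩
            · exact absurd rfl hne
          rcases this with ⟨rfl, rfl⟩ | ⟨rfl, rfl⟩
          · apply closedBall_disjoint_closedBall
            show s y + s y < dist y (z y)
            have h0 : 0 < dist (z y) y := dist_pos.2 (hzne y)
            rw [dist_comm]
            simp only [hs]
            linarith
          · apply closedBall_disjoint_closedBall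
            show s y + s y < dist (z y) y
            have h0 : 0 < dist (z y) y := dist_pos.2 (hzne y)
            simp only [hs]
            linarith
        · -- same parent, different net points
          have hsep : δ' ≤ dist y y' := hYsep p (Finset.mem_coe.2 hy) (Finset.mem_coe.2 hy') hyy
          obtain ⟨hc1, hr1⟩ := hcenter p y q hcase
          obtain ⟨hc2, hr2⟩ := hcenter p y' q' hcase'
          apply closedBall_disjoint_closedBall
          rw [hr1, hr2]
          have htri : dist y y' ≤ dist y q.1 + dist q.1 q'.1 + dist q'.1 y' := by
            have t1 := dist_triangle y q.1 y'
            have t2 := dist_triangle q.1 q'.1 y'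
            linarith
          have h1 : dist y q.1 ≤ δ'/4 := by rw [dist_comm]; exact hc1
          have h2 : dist q'.1 y' ≤ δ'/4 := hc2
          have := hsle y
          have := hsle y'
          linarith
      · -- different parents
        have := hF.2 (Finset.mem_coe.2 p.2) (Finset.mem_coe.2 p'.2)
          (fun h => hpp (Subtype.ext h))
        exact this.mono
          ((hchp p y q hy hcase).trans ball_subset_closedBall)
          ((hchp p' y' q' hy' hcase').trans ball_subset_closedBall)
  have hYne : ∀ p, ∃ y, y ∈ Y p := by
    intro p
    obtain ⟨y, hy, -⟩ := hYcov p (w p) (Finset.mem_insert_self _ _)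
    exact ⟨y, hy⟩
  refine ⟨G, hreg, ⟨?_, ?_⟩, ?_, ?_⟩
  · -- parents
    intro q hq
    obtain ⟨p, y, hy, hcase⟩ := (memG q).1 hq
    refine ⟨(p : Node X), p.2, ?_, (hchp p y q hy hcase).trans ball_subset_closedBall⟩
    rcases hcase with rfl | rfl <;> rfl
  · -- splitting
    intro p hp
    obtain ⟨y, hy⟩ := hYne ⟨p, hp⟩
    refine ⟨ch1 ⟨p, hp⟩ y, ?_, ch2 ⟨p, hp⟩ y, ?_, ?_, rfl, rfl, ?_, ?_⟩
    · exact (memG _).2 ⟨⟨p, hp⟩, y, hy, Or.inl rfl⟩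
    · exact (memG _).2 ⟨⟨p, hp⟩, y, hy, Or.inr rfl⟩
    · intro h
      exact hzne y (congrArg Prod.fst h).symm
    · exact (hchp ⟨p, hp⟩ y _ hy (Or.inl rfl)).trans ball_subset_closedBall
    · exact (hchp ⟨p, hp⟩ y _ hy (Or.inr rfl)).trans ball_subset_closedBall
  · -- radii
    intro q hq
    obtain ⟨p, y, hy, hcase⟩ := (memG q).1 hq
    rw [(hcenter p y q hcase).2]
    exact (hsle y).trans (by linarith)
  · -- the Vietoris property
    intro L hL1 hL2
    have hdist : hausdorffDist (L : Set X) (K : Set X) ≤ 3 * δ' := by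
      apply hausdorffDist_le_of_mem_dist (by positivity)
      · intro x hx
        obtain ⟨q, hqmem, hqx⟩ : ∃ q ∈ G, x ∈ nb q := by
          have := hL1 hx
          simp only [uni, mem_iUnion] at this
          obtain ⟨q, hq, hxq⟩ := this
          exact ⟨q, hq, hxq⟩
        obtain ⟨p, y, hy, hcase⟩ := (memG q).1 hqmem
        refine ⟨y, hyK p y hy, ?_⟩
        have := hchsub p y q hcase hqx
        rw [mem_closedBall] at this
        linarith
      · intro k hk
        obtain ⟨a, ha, hka⟩ : ∃ a ∈ N, dist k a < δ' := by
          have := htcov hk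
          simp only [mem_iUnion] at this
          obtain ⟨a, haT, hka⟩ := this
          exact ⟨a, htfin.mem_toFinset.2 haT, mem_ball.1 hka⟩
        have haK : a ∈ (K : Set X) := hNK a ha
        have haB : a ∈ ball ((P a haK : Node X)).1 ((P a haK : Node X)).2.1 :=
          hP a haK (mem_ball_self hμ)
        have haNp : a ∈ Np (P a haK) :=
          Finset.mem_insert_of_mem (Finset.mem_filter.2 ⟨ha, haB⟩)
        obtain ⟨y, hy, hay⟩ := hYcov (P a haK) a haNp
        obtain ⟨v, hvL, hvb⟩ := hL2 (ch1 (P a haK) y)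
          ((memG _).2 ⟨P a haK, y, hy, Or.inl rfl⟩)
        refine ⟨v, hvL, ?_⟩
        have hvy : dist v y ≤ s y := mem_closedBall.1 hvb
        have := hsle y
        calc dist k v ≤ dist k a + dist a v := dist_triangle _ _ _
          _ ≤ dist k a + (dist a y + dist y v) := by linarith [dist_triangle a y v]
          _ ≤ 3 * δ' := by
              rw [dist_comm y v] at *
              linarith
    have : dist L K < ρ := by
      rw [NonemptyCompacts.dist_eq]
      calc hausdorffDist (L : Set X) (K : Set X) ≤ 3 * δ' := hdist
        _ < ρ := by linarith
    exact hρball (mem_ball.2 this)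

end KM17
end
section
variable {X : Type*} [MetricSpace X] [CompactSpace X] [Nonempty X]
open TopologicalSpace Metric Set KM17
namespace KM17

def VP (j : ℕ) (U : Set (NonemptyCompacts X)) (F : Finset (Node X)) : Prop :=
  ∀ L : NonemptyCompacts X, (L : Set X) ⊆ uni (sub j F) →
    (∀ q ∈ sub j F, ((L : Set X) ∩ nb q).Nonempty) → L ∈ U

lemma VP.ext {j : ℕ} {U : Set (NonemptyCompacts X)} {F G : Finset (Node X)}
    (hE : Ext F G) (h : VP j U F) : VP j U G := by
  intro L hL1 hL2
  apply h L
  · intro x hx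
    have hx' := hL1 hx
    simp only [uni, mem_iUnion] at hx' ⊢
    obtain ⟨q, hq, hxq⟩ := hx'
    obtain ⟨p, hp, hlab, hsub⟩ := hE.1 q (mem_sub.1 hq).1
    exact ⟨p, mem_sub.2 ⟨hp, hlab ▸ (mem_sub.1 hq).2⟩, hsub hxq⟩
  · intro p hp
    obtain ⟨q, hq, _, _, _, hlab, _, hsub, _⟩ := hE.2 p (mem_sub.1 hp).1
    obtain ⟨v, hvL, hvq⟩ := hL2 q (mem_sub.2 ⟨hq, hlab ▸ (mem_sub.1 hp).2⟩)
    exact ⟨v, hvL, hsub hvq⟩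

lemma Ext.sub_nonempty {j : ℕ} {F G : Finset (Node X)} (hE : Ext F G)
    (h : (sub j F).Nonempty) : (sub j G).Nonempty := by
  obtain ⟨p, hp⟩ := h
  obtain ⟨q, hq, _, _, _, hlab, _, _, _⟩ := hE.2 p (mem_sub.1 hp).1
  exact ⟨q, mem_sub.2 ⟨hq, hlab ▸ (mem_sub.1 hp).2⟩⟩

lemma cond_step (hperf : Perfect (Set.univ : Set X)) {F : Finset (Node X)} (hF : reg F)
    {j : ℕ} (hne : (sub j F).Nonempty) {U : Set (NonemptyCompacts X)}
    (hUo : IsOpen U) (hUd : Dense U) {δ : ℝ} (hδ : 0 < δ) :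
    ∃ G, reg G ∧ Ext F G ∧ (∀ q ∈ G, q.2.1 ≤ δ) ∧ VP j U G := by
  classical
  set F1 : Finset (Node X) := sub j F with hF1
  set F2 : Finset (Node X) := F \ F1 with hF2
  have hregF1 : reg F1 := reg_subset sub_subset hF
  have hregF2 : reg F2 := reg_subset (Finset.sdiff_subset) hF
  obtain ⟨G1, hG1, hE1, hr1, hviet⟩ := cond_ext hperf hregF1 hne hUo hUd hδ
  obtain ⟨G2, hG2, hE2, hr2⟩ := plain_split_all hperf hregF2 hδ
  set G : Finset (Node X) := G1 ∪ G2 with hGdef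
  have hmemG : ∀ q, q ∈ G ↔ q ∈ G1 ∨ q ∈ G2 := fun q => Finset.mem_union
  -- labels
  have hlab1 : ∀ q ∈ G1, q.2.2 ≤ j := by
    intro q hq
    obtain ⟨p, hp, hlab, _⟩ := hE1.1 q hq
    exact hlab ▸ (mem_sub.1 hp).2
  have hlab2 : ∀ q ∈ G2, ¬(q.2.2 ≤ j) := by
    intro q hq
    obtain ⟨p, hp, hlab, _⟩ := hE2.1 q hq
    have := (Finset.mem_sdiff.1 hp).2
    rw [← hlab]
    intro hle
    exact this (mem_sub.2 ⟨(Finset.mem_sdiff.1 hp).1, hlab ▸ hle⟩)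
  have hsubG : sub j G = G1 := by
    apply Finset.Subset.antisymm
    · intro q hq
      obtain ⟨hqG, hqlab⟩ := mem_sub.1 hq
      rcases (hmemG q).1 hqG with h | h
      · exact h
      · exact absurd hqlab (hlab2 q h)
    · intro q hq
      exact mem_sub.2 ⟨(hmemG q).2 (Or.inl hq), hlab1 q hq⟩
  have hregG : reg G := by
    constructor
    · intro q hq
      rcases (hmemG q).1 hq with h | h
      · exact hG1.1 q h
      · exact hG2.1 q h
    · intro q hq q' hq' hne'
      have key : ∀ a b : Node X, a ∈ G1 → b ∈ G2 → Disjoint (nb a) (nb b) := by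
        intro a b ha hb
        obtain ⟨p, hp, _, hsuba⟩ := hE1.1 a ha
        obtain ⟨p', hp', _, hsubb⟩ := hE2.1 b hb
        have hpF : p ∈ F := sub_subset hp
        have hp'F : p' ∈ F := Finset.sdiff_subset hp'
        have hppne : p ≠ p' := by
          intro h
          exact (Finset.mem_sdiff.1 hp').2 (h ▸ hp)
        exact (hF.2 (Finset.mem_coe.2 hpF) (Finset.mem_coe.2 hp'F) hppne).mono hsuba hsubb
      rcases (hmemG q).1 (Finset.mem_coe.1 hq) with h | h <;>
        rcases (hmemG q').1 (Finset.mem_coe.1 hq') with h' | h'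
      · exact hG1.2 (Finset.mem_coe.2 h) (Finset.mem_coe.2 h') hne'
      · exact key q q' h h'
      · exact (key q' q h' h).symm
      · exact hG2.2 (Finset.mem_coe.2 h) (Finset.mem_coe.2 h') hne'
  refine ⟨G, hregG, ⟨?_, ?_⟩, ?_, ?_⟩
  · intro q hq
    rcases (hmemG q).1 hq with h | h
    · obtain ⟨p, hp, hlab, hsub'⟩ := hE1.1 q h
      exact ⟨p, sub_subset hp, hlab, hsub'⟩
    · obtain ⟨p, hp, hlab, hsub'⟩ := hE2.1 q h
      exact ⟨p, Finset.sdiff_subset hp, hlab, hsub'⟩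
  · intro p hp
    by_cases hpj : p ∈ F1
    · obtain ⟨q, hq, q', hq', hne', h1, h2, h3, h4⟩ := hE1.2 p hpj
      exact ⟨q, (hmemG q).2 (Or.inl hq), q', (hmemG q').2 (Or.inl hq'), hne', h1, h2, h3, h4⟩
    · have : p ∈ F2 := Finset.mem_sdiff.2 ⟨hp, hpj⟩
      obtain ⟨q, hq, q', hq', hne', h1, h2, h3, h4⟩ := hE2.2 p this
      exact ⟨q, (hmemG q).2 (Or.inr hq), q', (hmemG q').2 (Or.inr hq'), hne', h1, h2, h3, h4⟩
  · intro q hq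
    rcases (hmemG q).1 hq with h | h
    · exact hr1 q h
    · exact hr2 q h
  · intro L hL1 hL2
    rw [hsubG] at hL1 hL2
    exact hviet L hL1 hL2

lemma fold_conds (hperf : Perfect (Set.univ : Set X)) :
    ∀ (l : List (ℕ × Set (NonemptyCompacts X))) (F : Finset (Node X)), reg F →
    (sub 0 F).Nonempty → (∀ pr ∈ l, IsOpen pr.2 ∧ Dense pr.2) → ∀ {δ : ℝ}, 0 < δ →
    ∃ G, reg G ∧ Ext F G ∧ (∀ q ∈ G, q.2.1 ≤ δ) ∧ (sub 0 G).Nonempty ∧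
      ∀ pr ∈ l, VP pr.1 pr.2 G := by
  intro l
  induction l with
  | nil =>
    intro F hF h0 _ δ hδ
    obtain ⟨G, hG, hE, hr⟩ := plain_split_all hperf hF hδ
    exact ⟨G, hG, hE, hr, hE.sub_nonempty h0, by simp⟩
  | cons pr l ih =>
    intro F hF h0 hl δ hδ
    have hsubne : (sub pr.1 F).Nonempty := by
      obtain ⟨p, hp⟩ := h0
      exact ⟨p, sub_mono (Nat.zero_le _) hp⟩
    obtain ⟨G1, hG1, hE1, hr1, hVP1⟩ :=
      cond_step hperf hF hsubne (hl pr List.mem_cons_self).1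
        (hl pr List.mem_cons_self).2 hδ
    obtain ⟨G, hG, hE, hr, h0', hVPs⟩ := ih G1 hG1 (hE1.sub_nonempty h0)
      (fun pr' hpr' => hl pr' (List.mem_cons_of_mem _ hpr')) hδ
    refine ⟨G, hG, hE1.trans' hG1 hG hE, hr, h0', ?_⟩
    intro pr' hpr'
    rcases List.mem_cons.1 hpr' with rfl | hpr'
    · exact hVP1.ext hE
    · exact hVPs pr' hpr'

end KM17
end
section
variable {X : Type*} [MetricSpace X] [CompactSpace X] [Nonempty X]
open TopologicalSpace Metric Set KM17
namespace KM17

lemma super_step (hperf : Perfect (Set.univ : Set X)) (Uop : ℕ → Set (NonemptyCompacts X))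
    (hUo : ∀ n, IsOpen (Uop n)) (hUd : ∀ n, Dense (Uop n)) (i : ℕ) {F : Finset (Node X)}
    (hF : reg F) (h0 : (sub 0 F).Nonempty) (hlab : ∀ p ∈ F, p.2.2 ≤ i) :
    ∃ G, reg G ∧ (sub 0 G).Nonempty ∧
      (∀ q ∈ G, q.2.1 ≤ (2:ℝ)⁻¹ ^ (i+1) ∧ q.2.2 ≤ i+1) ∧
      (∀ q ∈ G, q.2.2 = i+1 ∨ ∃ p ∈ F, p.2.2 = q.2.2 ∧ nb q ⊆ nb p) ∧
      (∀ p ∈ F, ∃ q ∈ G, ∃ q' ∈ G, q ≠ q' ∧ q.2.2 = p.2.2 ∧ q'.2.2 = p.2.2 ∧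
        nb q ⊆ nb p ∧ nb q' ⊆ nb p) ∧
      (∀ x : X, ∃ q ∈ G, dist x q.1 ≤ 5 * (2:ℝ)⁻¹ ^ (i+1)) ∧
      (∀ j n, j ≤ i+1 → n ≤ i+1 → VP j (Uop n) G) := by
  classical
  set η : ℝ := (2:ℝ)⁻¹ ^ (i+1) with hηdef
  have hη : 0 < η := by positivity
  obtain ⟨F1, hF1, hE1, hr1⟩ := plain_split_all hperf hF hη
  obtain ⟨F2, hF12, hF2, hnew, hr2, hcov⟩ := creation F1 hF1 hη hr1 (i+1)
  set l := (List.range (i+2)).flatMap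
    (fun j => (List.range (i+2)).map (fun n => (j, Uop n))) with hldef
  have hl : ∀ pr ∈ l, IsOpen pr.2 ∧ Dense pr.2 := by
    intro pr hpr
    simp only [hldef, List.mem_flatMap, List.mem_map, List.mem_range] at hpr
    obtain ⟨j, hj, n, hn, rfl⟩ := hpr
    exact ⟨hUo n, hUd n⟩
  have h0F2 : (sub 0 F2).Nonempty := by
    obtain ⟨p, hp⟩ := hE1.sub_nonempty h0
    exact ⟨p, mem_sub.2 ⟨hF12 (mem_sub.1 hp).1, (mem_sub.1 hp).2⟩⟩
  obtain ⟨G, hG, hE, hr, h0G, hVPs⟩ := fold_conds hperf l F2 hF2 h0F2 hl hη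
  have hlabF1 : ∀ q ∈ F1, q.2.2 ≤ i := fun q hq => by
    obtain ⟨p, hp, hlabq, _⟩ := hE1.1 q hq
    exact hlabq ▸ hlab p hp
  have hlabF2 : ∀ q ∈ F2, q.2.2 ≤ i+1 := fun q hq => by
    by_cases h : q ∈ F1
    · exact (hlabF1 q h).trans (Nat.le_succ _)
    · exact (hnew q hq h).1.le
  refine ⟨G, hG, h0G, ?_, ?_, ?_, ?_, ?_⟩
  · intro q hq
    obtain ⟨p, hp, hlabq, _⟩ := hE.1 q hq
    exact ⟨hr q hq, hlabq ▸ hlabF2 p hp⟩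
  · intro q hq
    obtain ⟨p2, hp2, hlab2, hsub2⟩ := hE.1 q hq
    by_cases h : p2 ∈ F1
    · obtain ⟨p, hp, hlabp, hsubp⟩ := hE1.1 p2 h
      exact Or.inr ⟨p, hp, by rw [hlabp, hlab2], hsub2.trans hsubp⟩
    · exact Or.inl (by rw [← hlab2]; exact (hnew p2 hp2 h).1)
  · intro p hp
    obtain ⟨q1, hq1, q1', hq1', hne1, hl1, hl1', hs1, hs1'⟩ := hE1.2 p hp
    obtain ⟨c, hc, _, _, _, hcl, _, hcs, _⟩ := hE.2 q1 (hF12 hq1)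
    obtain ⟨c', hc', _, _, _, hc'l, _, hc's, _⟩ := hE.2 q1' (hF12 hq1')
    have hdisj : Disjoint (nb q1) (nb q1') :=
      hF1.2 (Finset.mem_coe.2 hq1) (Finset.mem_coe.2 hq1') hne1
    have hcne : c ≠ c' := by
      intro h
      subst h
      obtain ⟨x, hx⟩ := nb_nonempty (hG.1 c hc)
      exact hdisj.le_bot ⟨hcs hx, hc's hx⟩
    exact ⟨c, hc, c', hc', hcne, by rw [hcl, hl1], by rw [hc'l, hl1'],
      hcs.trans hs1, hc's.trans hs1'⟩
  · intro x
    obtain ⟨q2, hq2, hdq2⟩ := hcov x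
    obtain ⟨c, hc, _, _, _, _, _, hcs, _⟩ := hE.2 q2 hq2
    refine ⟨c, hc, ?_⟩
    have hcc : c.1 ∈ nb q2 := hcs (mem_closedBall_self (hG.1 c hc).le)
    have h1 : dist c.1 q2.1 ≤ q2.2.1 := mem_closedBall.1 hcc
    have hq2r : q2.2.1 ≤ η := hr2 q2 hq2
    calc dist x c.1 ≤ dist x q2.1 + dist q2.1 c.1 := dist_triangle _ _ _
      _ ≤ 5 * η := by rw [dist_comm q2.1 c.1]; linarith
  · intro j n hj hn
    apply hVPs (j, Uop n)
    simp only [hldef, List.mem_flatMap, List.mem_map, List.mem_range]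
    exact ⟨j, by omega, n, by omega, rfl⟩

end KM17
end
section
variable {X : Type*} [MetricSpace X] [CompactSpace X] [Nonempty X]
open TopologicalSpace Metric Set KM17
namespace KM17

lemma mem_uni {F : Finset (Node X)} {x : X} : x ∈ uni F ↔ ∃ p ∈ F, x ∈ nb p := by
  simp [uni]

lemma uni_mono {F G : Finset (Node X)} (h : F ⊆ G) : uni F ⊆ uni G := by
  intro x hx
  obtain ⟨p, hp, hxp⟩ := mem_uni.1 hx
  exact mem_uni.2 ⟨p, h hp, hxp⟩

def Pinv (i : ℕ) (F : Finset (Node X)) : Prop :=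
  reg F ∧ (sub 0 F).Nonempty ∧ ∀ p ∈ F, p.2.1 ≤ (2:ℝ)⁻¹ ^ i ∧ p.2.2 ≤ i

def Rel (Uop : ℕ → Set (NonemptyCompacts X)) (i : ℕ) (F G : Finset (Node X)) : Prop :=
  (∀ q ∈ G, q.2.2 = i+1 ∨ ∃ p ∈ F, p.2.2 = q.2.2 ∧ nb q ⊆ nb p) ∧
  (∀ p ∈ F, ∃ q ∈ G, ∃ q' ∈ G, q ≠ q' ∧ q.2.2 = p.2.2 ∧ q'.2.2 = p.2.2 ∧
    nb q ⊆ nb p ∧ nb q' ⊆ nb p) ∧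
  (∀ x : X, ∃ q ∈ G, dist x q.1 ≤ 5 * (2:ℝ)⁻¹ ^ (i+1)) ∧
  (∀ j n, j ≤ i+1 → n ≤ i+1 → VP j (Uop n) G)

lemma master (hperf : Perfect (Set.univ : Set X)) (Uop : ℕ → Set (NonemptyCompacts X))
    (hUo : ∀ n, IsOpen (Uop n)) (hUd : ∀ n, Dense (Uop n)) :
    ∃ C : ℕ → NonemptyCompacts X,
      (∀ i, Perfect (C i : Set X) ∧ IsTotallyDisconnected (C i : Set X)) ∧
      (∀ i n, C i ∈ Uop n) ∧ (∀ i, (C i : Set X) ⊆ (C (i + 1) : Set X)) ∧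
      Dense (⋃ i, (C i : Set X)) := by
  classical
  obtain ⟨x₀⟩ := (inferInstance : Nonempty X)
  have hP0 : Pinv 0 ({(x₀, 1, 0)} : Finset (Node X)) := by
    refine ⟨⟨?_, ?_⟩, ?_, ?_⟩
    · intro p hp
      rw [Finset.mem_singleton] at hp
      subst hp
      norm_num
    · rw [Finset.coe_singleton]
      exact Set.pairwise_singleton _ _
    · exact ⟨(x₀,1,0), mem_sub.2 ⟨Finset.mem_singleton_self _, le_refl 0⟩⟩
    · intro p hp
      rw [Finset.mem_singleton] at hp
      subst hp
      norm_num
  have step : ∀ i F, Pinv i F → ∃ G, Pinv (i+1) G ∧ Rel Uop i F G := by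
    intro i F hPF
    obtain ⟨G, hG, h0, hrl, hnest, hsplit, hdense, hvp⟩ :=
      super_step hperf Uop hUo hUd i hPF.1 hPF.2.1 (fun p hp => (hPF.2.2 p hp).2)
    exact ⟨G, ⟨hG, h0, fun p hp => hrl p hp⟩, hnest, hsplit, hdense, hvp⟩
  choose! next hnext using step
  let Gc : ℕ → Finset (Node X) := fun i =>
    Nat.rec ({(x₀,1,0)} : Finset (Node X)) (fun i Gi => next i Gi) i
  have hPc : ∀ i, Pinv i (Gc i) := by
    intro i
    induction i with
    | zero => exact hP0
    | succ i ih => exact (hnext i (Gc i) ih).1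
  have hRel : ∀ i, Rel Uop i (Gc i) (Gc (i+1)) := fun i => (hnext i (Gc i) (hPc i)).2
  -- nesting of approximations
  have hAnest : ∀ j t, j ≤ t → uni (sub j (Gc (t+1))) ⊆ uni (sub j (Gc t)) := by
    intro j t hjt x hx
    obtain ⟨q, hq, hxq⟩ := mem_uni.1 hx
    obtain ⟨hqG, hqlab⟩ := mem_sub.1 hq
    rcases (hRel t).1 q hqG with h | ⟨p, hp, hplab, hpsub⟩
    · omega
    · exact mem_uni.2 ⟨p, mem_sub.2 ⟨hp, hplab ▸ hqlab⟩, hpsub hxq⟩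
  have hAmono : ∀ j t s, j ≤ t → t ≤ s → uni (sub j (Gc s)) ⊆ uni (sub j (Gc t)) := by
    intro j t s hjt hts
    induction s, hts using Nat.le_induction with
    | base => exact subset_rfl
    | succ s hts ih => exact (hAnest j s (hjt.trans hts)).trans ih
  set Cs : ℕ → Set X := fun j => ⋂ t, uni (sub j (Gc (j + t))) with hCsdef
  have hCclosed : ∀ j, IsClosed (Cs j) :=
    fun j => isClosed_iInter (fun t => isClosed_uni _)
  have hCsub : ∀ j t, j ≤ t → Cs j ⊆ uni (sub j (Gc t)) := by
    intro j t h
    have h2 := iInter_subset (fun u => uni (sub j (Gc (j+u)))) (t - j)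
    rw [show j + (t-j) = t by omega] at h2
    exact h2
  -- the limit set meets every current ball
  have hmeets : ∀ j t, j ≤ t → ∀ p ∈ sub j (Gc t), (Cs j ∩ nb p).Nonempty := by
    intro j t hjt p hp
    have stepc : ∀ s (q : Node X), q ∈ sub j (Gc s) →
        ∃ q', q' ∈ sub j (Gc (s+1)) ∧ nb q' ⊆ nb q := by
      intro s q hq
      obtain ⟨c, hc, _, _, _, hcl, _, hcs, _⟩ := (hRel s).2.1 q (mem_sub.1 hq).1
      exact ⟨c, mem_sub.2 ⟨hc, hcl ▸ (mem_sub.1 hq).2⟩, hcs⟩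
    choose! ch hch1 hch2 using stepc
    let seq : ℕ → Node X := fun s => Nat.rec p (fun s qs => ch (t+s) qs) s
    have hseq : ∀ s, seq s ∈ sub j (Gc (t+s)) := by
      intro s
      induction s with
      | zero => exact hp
      | succ s ihs => exact hch1 (t+s) (seq s) ihs
    have hseqsub : ∀ s, nb (seq (s+1)) ⊆ nb (seq s) :=
      fun s => hch2 (t+s) (seq s) (hseq s)
    have hne : ∀ s, (nb (seq s)).Nonempty :=
      fun s => nb_nonempty ((hPc (t+s)).1.1 _ (sub_subset (hseq s)))
    obtain ⟨x, hx⟩ := IsCompact.nonempty_iInter_of_sequence_nonempty_isCompact_isClosed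
      (fun s => nb (seq s)) hseqsub hne (isClosed_nb _).isCompact (fun s => isClosed_nb _)
    have hx0 : x ∈ nb p := by
      have := mem_iInter.1 hx 0
      exact this
    refine ⟨x, ?_, hx0⟩
    rw [hCsdef]
    simp only [mem_iInter]
    intro u
    by_cases hcase : t ≤ j + u
    · have h1 : x ∈ nb (seq (j + u - t)) := mem_iInter.1 hx _
      have hmem := hseq (j + u - t)
      rw [show t + (j + u - t) = j + u by omega] at hmem
      exact mem_uni.2 ⟨seq (j + u - t), hmem, h1⟩
    · have hxA : x ∈ uni (sub j (Gc t)) := mem_uni.2 ⟨p, hp, hx0⟩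
      exact hAmono j (j+u) t (by omega) (by omega) hxA
  have hCne : ∀ j, (Cs j).Nonempty := by
    intro j
    obtain ⟨p, hp0⟩ := (hPc j).2.1
    obtain ⟨x, hx, -⟩ := hmeets j j le_rfl p (sub_mono (Nat.zero_le j) hp0)
    exact ⟨x, hx⟩
  have hCcomp : ∀ j, IsCompact (Cs j) := fun j => (hCclosed j).isCompact
  set NC : ℕ → NonemptyCompacts X := fun j => ⟨⟨Cs j, hCcomp j⟩, hCne j⟩ with hNCdef
  have hNCcoe : ∀ j, (NC j : Set X) = Cs j := fun j => rfl
  -- helper: choice of large stage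
  have hlarge : ∀ (j : ℕ) (ε : ℝ), 0 < ε → ∃ T, j ≤ T ∧ 2 * (2:ℝ)⁻¹ ^ T < ε := by
    intro j ε hε
    obtain ⟨n₀, hn₀⟩ := exists_pow_lt_of_lt_one (by linarith : (0:ℝ) < ε/2)
      (by norm_num : (2:ℝ)⁻¹ < 1)
    refine ⟨max j n₀, le_max_left _ _, ?_⟩
    have := pow_le_pow_of_le_one (by norm_num : (0:ℝ) ≤ 2⁻¹) (by norm_num : (2:ℝ)⁻¹ ≤ 1)
      (le_max_right j n₀)
    linarith
  -- membership in all the open sets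
  have hNCU : ∀ j n, NC j ∈ Uop n := by
    intro j n
    set T : ℕ := max j n + 1 with hTdef
    have hvp : VP j (Uop n) (Gc T) := by
      have := (hRel (max j n)).2.2.2 j n (by omega) (by omega)
      exact this
    apply hvp (NC j)
    · rw [hNCcoe]
      exact hCsub j T (by omega)
    · intro q hq
      exact hmeets j T (by omega) q hq
  -- perfectness
  have hCperf : ∀ j, Perfect (Cs j) := by
    intro j
    refine ⟨hCclosed j, ?_⟩
    intro x hx
    rw [accPt_iff_nhds]
    intro U hU
    obtain ⟨ε, hε, hball⟩ := Metric.mem_nhds_iff.1 hU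
    obtain ⟨T, hjT, hTε⟩ := hlarge j ε hε
    obtain ⟨p, hp, hxp⟩ := mem_uni.1 (hCsub j T hjT hx)
    have hrp : p.2.1 ≤ (2:ℝ)⁻¹ ^ T := ((hPc T).2.2 p (sub_subset hp)).1
    obtain ⟨q, hq, q', hq', hqne, hqlab, hq'lab, hqsub, hq'sub⟩ :=
      (hRel T).2.1 p (mem_sub.1 hp).1
    have hqj : q ∈ sub j (Gc (T+1)) := mem_sub.2 ⟨hq, hqlab ▸ (mem_sub.1 hp).2⟩
    have hq'j : q' ∈ sub j (Gc (T+1)) := mem_sub.2 ⟨hq', hq'lab ▸ (mem_sub.1 hp).2⟩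
    have hdisj : Disjoint (nb q) (nb q') :=
      (hPc (T+1)).1.2 (Finset.mem_coe.2 hq) (Finset.mem_coe.2 hq') hqne
    -- pick the child avoiding x
    obtain ⟨c, hcj, hxc, hcsub⟩ :
        ∃ c, c ∈ sub j (Gc (T+1)) ∧ x ∉ nb c ∧ nb c ⊆ nb p := by
      by_cases hxq : x ∈ nb q
      · exact ⟨q', hq'j, fun hq'x => hdisj.le_bot ⟨hxq, hq'x⟩, hq'sub⟩
      · exact ⟨q, hqj, hxq, hqsub⟩
    obtain ⟨y, hyC, hyc⟩ := hmeets j (T+1) (by omega) c hcj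
    refine ⟨y, ⟨?_, hyC⟩, fun h => hxc (h ▸ hyc)⟩
    apply hball
    rw [mem_ball]
    have h1 : dist y p.1 ≤ p.2.1 := mem_closedBall.1 (hcsub hyc)
    have h2 : dist x p.1 ≤ p.2.1 := mem_closedBall.1 hxp
    calc dist y x ≤ dist y p.1 + dist p.1 x := dist_triangle _ _ _
      _ < ε := by
          rw [dist_comm p.1 x]
          linarith
  -- total disconnectedness
  have hCtd : ∀ j, IsTotallyDisconnected (Cs j) := by
    intro j t hts htc
    intro x hx y hy
    by_contra hxy
    have hdxy : 0 < dist x y := dist_pos.2 hxy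
    obtain ⟨T, hjT, hTd⟩ := hlarge j (dist x y) hdxy
    obtain ⟨p, hp, hxp⟩ := mem_uni.1 (hCsub j T hjT (hts hx))
    obtain ⟨p', hp', hyp'⟩ := mem_uni.1 (hCsub j T hjT (hts hy))
    have hrp : p.2.1 ≤ (2:ℝ)⁻¹ ^ T := ((hPc T).2.2 p (sub_subset hp)).1
    have hrp' : p'.2.1 ≤ (2:ℝ)⁻¹ ^ T := ((hPc T).2.2 p' (sub_subset hp')).1
    have hpp' : p ≠ p' := by
      intro h
      subst h
      have h1 : dist x p.1 ≤ p.2.1 := mem_closedBall.1 hxp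
      have h2 : dist y p.1 ≤ p.2.1 := mem_closedBall.1 hyp'
      have : dist x y ≤ dist x p.1 + dist p.1 y := dist_triangle _ _ _
      rw [dist_comm p.1 y] at this
      linarith
    set V₁ : Set X := nb p with hV₁
    set V₂ : Set X := uni ((sub j (Gc T)).erase p) with hV₂
    have hdisjV : Disjoint V₁ V₂ := by
      rw [Set.disjoint_left]
      intro a ha hav₂
      obtain ⟨q, hq, haq⟩ := mem_uni.1 hav₂
      have hqne : q ≠ p := Finset.ne_of_mem_erase hq
      have := (hPc T).1.2 (Finset.mem_coe.2 (sub_subset (Finset.mem_of_mem_erase hq)))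
        (Finset.mem_coe.2 (sub_subset hp)) (fun h => hqne h)
      exact this.le_bot ⟨haq, ha⟩
    have hcl1 : IsClosed V₁ := isClosed_nb p
    have hcl2 : IsClosed V₂ := isClosed_uni _
    obtain ⟨O₁, O₂, hO₁, hO₂, hsub1, hsub2, hOdisj⟩ :=
      normal_separation hcl1 hcl2 hdisjV
    have hcover : t ⊆ O₁ ∪ O₂ := by
      intro a ha
      obtain ⟨q, hq, haq⟩ := mem_uni.1 (hCsub j T hjT (hts ha))
      by_cases hqp : q = p
      · subst hqp
        exact Or.inl (hsub1 haq)
      · exact Or.inr (hsub2 (mem_uni.2 ⟨q, Finset.mem_erase.2 ⟨hqp, hq⟩, haq⟩))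
    have hymem : y ∈ V₂ :=
      mem_uni.2 ⟨p', Finset.mem_erase.2 ⟨fun h => hpp' h.symm, hp'⟩, hyp'⟩
    obtain ⟨w, hwt, hw12⟩ := htc O₁ O₂ hO₁ hO₂ hcover ⟨x, hx, hsub1 hxp⟩ ⟨y, hy, hsub2 hymem⟩
    exact hOdisj.le_bot hw12
  -- monotonicity
  have hCmono : ∀ j, Cs j ⊆ Cs (j+1) := by
    intro j x hx
    rw [hCsdef]
    simp only [mem_iInter]
    intro u
    have h1 : x ∈ uni (sub j (Gc (j + (u+1)))) := by
      rw [hCsdef] at hx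
      exact mem_iInter.1 hx (u+1)
    rw [show j + (u+1) = (j+1) + u by omega] at h1
    exact uni_mono (sub_mono (Nat.le_succ j)) h1
  -- density of the union
  have hCdense : Dense (⋃ j, Cs j) := by
    rw [Metric.dense_iff]
    intro x r hr
    obtain ⟨i, hi⟩ := exists_pow_lt_of_lt_one (by linarith : (0:ℝ) < r/6)
      (by norm_num : (2:ℝ)⁻¹ < 1)
    obtain ⟨q, hq, hdq⟩ := (hRel i).2.2.1 x
    have hqsub : q ∈ sub (i+1) (Gc (i+1)) :=
      mem_sub.2 ⟨hq, ((hPc (i+1)).2.2 q hq).2⟩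
    obtain ⟨y, hyC, hyq⟩ := hmeets (i+1) (i+1) le_rfl q hqsub
    have hrq : q.2.1 ≤ (2:ℝ)⁻¹ ^ (i+1) := ((hPc (i+1)).2.2 q hq).1
    have hpow : (2:ℝ)⁻¹ ^ (i+1) ≤ (2:ℝ)⁻¹ ^ i :=
      pow_le_pow_of_le_one (by norm_num) (by norm_num) (Nat.le_succ i)
    refine ⟨y, ?_, mem_iUnion.2 ⟨i+1, hyC⟩⟩
    rw [mem_ball]
    have h1 : dist y q.1 ≤ q.2.1 := mem_closedBall.1 hyq
    calc dist y x ≤ dist y q.1 + dist q.1 x := dist_triangle _ _ _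
      _ ≤ (2:ℝ)⁻¹ ^ (i+1) + 5 * (2:ℝ)⁻¹ ^ (i+1) := by
          rw [dist_comm q.1 x]
          linarith
      _ < r := by linarith
  exact ⟨NC, fun i => ⟨hCperf i, hCtd i⟩, hNCU, fun i => hCmono i, hCdense⟩

end KM17
end
open TopologicalSpace

theorem stmt17 {X : Type*} [MetricSpace X] [CompactSpace X] [Nonempty X]
    (hperf : Perfect (Set.univ : Set X))
    (Q : Set (NonemptyCompacts X))
    (hher : ∀ A ∈ Q, ∀ B : NonemptyCompacts X, (B : Set X) ⊆ (A : Set X) → B ∈ Q)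
    (hres : Q ∈ residual (NonemptyCompacts X)) :
    ∃ C : ℕ → NonemptyCompacts X,
      (∀ i, Perfect (C i : Set X) ∧ IsTotallyDisconnected (C i : Set X)) ∧
      (∀ i, C i ∈ Q) ∧ (∀ i, (C i : Set X) ⊆ (C (i + 1) : Set X)) ∧
      Dense (⋃ i, (C i : Set X)) := by
  classical
  obtain ⟨S, hSo, hSd, hScnt, hSsub⟩ := mem_residual_iff.1 hres
  set S' : Set (Set (NonemptyCompacts X)) := insert Set.univ S with hS'def
  have hS'cnt : S'.Countable := hScnt.insert _
  have hS'ne : S'.Nonempty := ⟨_, Set.mem_insert _ _⟩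
  obtain ⟨f, hf⟩ := hS'cnt.exists_eq_range hS'ne
  have hmemS' : ∀ n, f n ∈ S' := by
    intro n
    rw [hf]
    exact Set.mem_range_self n
  have hfo : ∀ n, IsOpen (f n) := by
    intro n
    rcases Set.mem_insert_iff.1 (hmemS' n) with h | h
    · rw [h]; exact isOpen_univ
    · exact hSo _ h
  have hfd : ∀ n, Dense (f n) := by
    intro n
    rcases Set.mem_insert_iff.1 (hmemS' n) with h | h
    · rw [h]; exact dense_univ
    · exact hSd _ h
  have hsub : ∀ K : NonemptyCompacts X, (∀ n, K ∈ f n) → K ∈ Q := by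
    intro K h
    apply hSsub
    intro s hs
    have : s ∈ S' := Set.mem_insert_of_mem _ hs
    rw [hf] at this
    obtain ⟨n, rfl⟩ := this
    exact h n
  obtain ⟨C, h1, h2, h3, h4⟩ := KM17.master hperf f hfo hfd
  exact ⟨C, h1, fun i => hsub (C i) (fun n => h2 i n), h3, h4⟩
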